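/- For every û₀ ∈ X = L²(ℝ^d; ℂ), the restriction operator R satisfies the Parseval-type identity ‖R û₀‖_{X_S} = (2π)^{-(d-1)/2} ‖û₀‖_{X}. -/

import Mathlib

open MeasureTheory Real Filter Metric
open scoped RealInnerProductSpace Topology ENNReal

noncomputable section

/-- The restriction operator `R`: `(R û₀)(ξ,q) = (|ξ|/(2πi))^{(d-1)/2} 1_{ξ>0} û₀(|ξ|q)`. -/
def restrictionOp (d : ℕ) (u0 : EuclideanSpace ℝ (Fin d) → ℂ)
    (ξ : ℝ) (q : EuclideanSpace ℝ (Fin d)) : ℂ :=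
  (((|ξ| : ℝ) : ℂ) / (2 * (π : ℂ) * Complex.I)) ^ (((d : ℂ) - 1) / 2) *
    Set.indicator (Set.Ioi (0 : ℝ)) (fun _ => (1 : ℂ)) ξ * u0 (|ξ| • q)

/-- Auxiliary: product of a measure with a `withDensity` measure. -/
lemma prod_withDensity_aux {α β : Type*} [MeasurableSpace α] [MeasurableSpace β]
    (κ : Measure α) [SigmaFinite κ] (ρ : Measure β) [SigmaFinite ρ] {w : β → ℝ≥0∞}
    (hw : Measurable w) [SigmaFinite (ρ.withDensity w)] :
    κ.prod (ρ.withDensity w) = (κ.prod ρ).withDensity (fun p => w p.2) := by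
  refine Measure.prod_eq (μ := κ) (ν := ρ.withDensity w) fun s t hs ht => ?_
  rw [withDensity_apply _ (hs.prod ht), ← Measure.prod_restrict,
    lintegral_prod (fun a : α × β => w a.2) ((hw.comp measurable_snd).aemeasurable)]
  simp only [lintegral_const, Measure.restrict_apply_univ]
  rw [withDensity_apply _ ht, mul_comm]

/-- Parseval-type identity for the restriction operator:
`‖R û₀‖_{X_S} = (2π)^{-(d-1)/2} ‖û₀‖_X`. -/
theorem restriction_parseval (d : ℕ) (hd : 1 ≤ d)
    (u0 : EuclideanSpace ℝ (Fin d) → ℂ)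
    (hu0 : MemLp u0 2 (volume : Measure (EuclideanSpace ℝ (Fin d)))) :
    eLpNorm (fun p : ℝ × sphere (0 : EuclideanSpace ℝ (Fin d)) 1 =>
        restrictionOp d u0 p.1 (p.2 : EuclideanSpace ℝ (Fin d))) 2
      ((volume : Measure ℝ).prod
        (Measure.toSphere (volume : Measure (EuclideanSpace ℝ (Fin d)))))
    = ENNReal.ofReal ((2 * π) ^ (-(((d : ℝ) - 1) / 2))) *
      eLpNorm u0 2 (volume : Measure (EuclideanSpace ℝ (Fin d))) := by
  classical
  haveI : Nontrivial (EuclideanSpace ℝ (Fin d)) := Module.nontrivial_of_finrank_pos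
    (R := ℝ) (by rw [finrank_euclideanSpace_fin]; omega)
  have hdim : Module.finrank ℝ (EuclideanSpace ℝ (Fin d)) = d := finrank_euclideanSpace_fin
  set σ : Measure (sphere (0 : EuclideanSpace ℝ (Fin d)) 1) :=
    (volume : Measure (EuclideanSpace ℝ (Fin d))).toSphere with hσ
  set n : ℕ := d - 1 with hn
  set ρ : Measure (Set.Ioi (0 : ℝ)) := (volume : Measure ℝ).comap Subtype.val with hρ
  set w : Set.Ioi (0 : ℝ) → ℝ≥0∞ := fun r => ENNReal.ofReal ((r : ℝ) ^ n) with hw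
  have hρw : ρ.withDensity w = Measure.volumeIoiPow n := rfl
  haveI : SigmaFinite ρ := by
    have h1 : Measure.volumeIoiPow 0 = ρ := by
      simp [Measure.volumeIoiPow, withDensity_one]
      exact hρ.symm
    rw [← h1]; infer_instance
  haveI : SigmaFinite (ρ.withDensity w) := by rw [hρw]; infer_instance
  have hwm : Measurable w := (measurable_subtype_coe.pow_const n).ennreal_ofReal
  set Φ := homeomorphUnitSphereProd (EuclideanSpace ℝ (Fin d)) with hΦ
  have hmp := (volume : Measure (EuclideanSpace ℝ (Fin d))).measurePreserving_homeomorphUnitSphereProd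
  rw [hdim] at hmp
  have hmapeq : σ.prod (ρ.withDensity w)
      = Measure.map Φ ((volume : Measure (EuclideanSpace ℝ (Fin d))).comap Subtype.val) := by
    rw [hρw]; exact hmp.map_eq.symm
  have hsub : MeasurableSet ({0}ᶜ : Set (EuclideanSpace ℝ (Fin d))) :=
    (measurableSet_singleton 0).compl
  -- a.e.-measurability of the radial integrand
  have hqmp : Measure.QuasiMeasurePreserving
      (Subtype.val : ({0}ᶜ : Set (EuclideanSpace ℝ (Fin d))) → EuclideanSpace ℝ (Fin d))
      ((volume : Measure (EuclideanSpace ℝ (Fin d))).comap Subtype.val) volume := by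
    refine ⟨measurable_subtype_coe, ?_⟩
    rw [map_comap_subtype_coe hsub]
    exact Measure.absolutelyContinuous_of_le Measure.restrict_le_self
  have h1 : AEStronglyMeasurable (fun x : ({0}ᶜ : Set (EuclideanSpace ℝ (Fin d))) => u0 x.1)
      ((volume : Measure (EuclideanSpace ℝ (Fin d))).comap Subtype.val) :=
    hu0.1.comp_quasiMeasurePreserving hqmp
  have hN : AEMeasurable
      (fun x : ({0}ᶜ : Set (EuclideanSpace ℝ (Fin d))) => (‖u0 x.1‖₊ : ℝ≥0∞) ^ (2 : ℝ))
      ((volume : Measure (EuclideanSpace ℝ (Fin d))).comap Subtype.val) :=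
    ENNReal.continuous_rpow_const.measurable.comp_aemeasurable h1.enorm
  set H : sphere (0 : EuclideanSpace ℝ (Fin d)) 1 × Set.Ioi (0 : ℝ) → ℝ≥0∞ :=
    fun z => (‖u0 ((z.2 : ℝ) • (z.1 : EuclideanSpace ℝ (Fin d)))‖₊ : ℝ≥0∞) ^ (2 : ℝ) with hH
  have hHcomp : H ∘ Φ
      = fun x : ({0}ᶜ : Set (EuclideanSpace ℝ (Fin d))) => (‖u0 x.1‖₊ : ℝ≥0∞) ^ (2 : ℝ) := by
    funext x
    have hx : ((Φ x).2 : ℝ) • ((Φ x).1 : EuclideanSpace ℝ (Fin d)) = (x : EuclideanSpace ℝ (Fin d)) := by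
      simp only [hΦ, homeomorphUnitSphereProd_apply_fst_coe,
        homeomorphUnitSphereProd_apply_snd_coe]
      rw [smul_inv_smul₀ (norm_ne_zero_iff.2 x.2)]
    simp only [Function.comp_apply, hH, hx]
  have hHmeas : AEMeasurable H (σ.prod (ρ.withDensity w)) := by
    rw [hmapeq, (Φ.measurableEmbedding).aemeasurable_map_iff, hHcomp]
    exact hN
  set C : ℝ≥0∞ := ENNReal.ofReal ((2 * π) ^ (-((d : ℝ) - 1))) with hC
  have hπ0 : (0 : ℝ) < 2 * π := by positivity
  -- the key lintegral identity
  have key : ∫⁻ p, (‖restrictionOp d u0 p.1 (p.2 : EuclideanSpace ℝ (Fin d))‖₊ : ℝ≥0∞) ^ (2 : ℝ)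
        ∂((volume : Measure ℝ).prod σ)
      = C * ∫⁻ x, (‖u0 x‖₊ : ℝ≥0∞) ^ (2 : ℝ) ∂(volume : Measure (EuclideanSpace ℝ (Fin d))) := by
    have swap1 :
        ∫⁻ p, (‖restrictionOp d u0 p.1 (p.2 : EuclideanSpace ℝ (Fin d))‖₊ : ℝ≥0∞) ^ (2 : ℝ)
            ∂((volume : Measure ℝ).prod σ)
        = ∫⁻ z, (‖restrictionOp d u0 z.2 (z.1 : EuclideanSpace ℝ (Fin d))‖₊ : ℝ≥0∞) ^ (2 : ℝ)
            ∂(σ.prod (volume : Measure ℝ)) :=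
      (lintegral_prod_swap
        (fun p : ℝ × sphere (0 : EuclideanSpace ℝ (Fin d)) 1 =>
          (‖restrictionOp d u0 p.1 (p.2 : EuclideanSpace ℝ (Fin d))‖₊ : ℝ≥0∞) ^ (2 : ℝ))).symm
    rw [swap1]
    have step2 :
        ∫⁻ z, (‖restrictionOp d u0 z.2 (z.1 : EuclideanSpace ℝ (Fin d))‖₊ : ℝ≥0∞) ^ (2 : ℝ)
            ∂(σ.prod (volume : Measure ℝ))
        = ∫⁻ z in (Set.univ ×ˢ Set.Ioi (0 : ℝ)),
            (‖restrictionOp d u0 z.2 (z.1 : EuclideanSpace ℝ (Fin d))‖₊ : ℝ≥0∞) ^ (2 : ℝ)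
            ∂(σ.prod (volume : Measure ℝ)) := by
      rw [← lintegral_indicator (MeasurableSet.univ.prod measurableSet_Ioi)]
      refine lintegral_congr fun z => ?_
      by_cases hz : z.2 ∈ Set.Ioi (0 : ℝ)
      · rw [Set.indicator_of_mem (Set.mem_prod.2 ⟨Set.mem_univ _, hz⟩)]
      · rw [Set.indicator_of_notMem (by simp [hz])]
        have h0 : restrictionOp d u0 z.2 (z.1 : EuclideanSpace ℝ (Fin d)) = 0 := by
          rw [restrictionOp, Set.indicator_of_notMem hz, mul_zero, zero_mul]
        rw [h0]
        simp [ENNReal.zero_rpow_of_pos two_pos]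
    rw [step2, ← Measure.prod_restrict, Measure.restrict_univ,
      ← map_comap_subtype_coe measurableSet_Ioi (volume : Measure ℝ), ← hρ]
    rw [show σ.prod (Measure.map Subtype.val ρ)
        = Measure.map (fun z : sphere (0 : EuclideanSpace ℝ (Fin d)) 1 × Set.Ioi (0 : ℝ) =>
            ((id z.1 : sphere (0 : EuclideanSpace ℝ (Fin d)) 1), (z.2 : ℝ))) (σ.prod ρ) from by
      have hmm : σ.prod (Measure.map Subtype.val ρ)
          = Measure.map (Prod.map id Subtype.val) (σ.prod ρ) := by
        rw [← Measure.map_prod_map _ _ measurable_id measurable_subtype_coe,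
          Measure.map_id]
      exact hmm]
    rw [(show MeasurableEmbedding (fun z : sphere (0 : EuclideanSpace ℝ (Fin d)) 1 × Set.Ioi (0 : ℝ) =>
        ((id z.1 : sphere (0 : EuclideanSpace ℝ (Fin d)) 1), (z.2 : ℝ))) from
      MeasurableEmbedding.id.prodMap
      (MeasurableEmbedding.subtype_coe measurableSet_Ioi)).lintegral_map]
    simp only [id_eq]
    have ptwise : ∀ z : sphere (0 : EuclideanSpace ℝ (Fin d)) 1 × Set.Ioi (0 : ℝ),
        (‖restrictionOp d u0 ((z.2 : ℝ))
            ((z.1 : sphere (0 : EuclideanSpace ℝ (Fin d)) 1) :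
              EuclideanSpace ℝ (Fin d))‖₊ : ℝ≥0∞) ^ (2 : ℝ)
          = w z.2 * (C * H z) := by
      rintro ⟨q, r⟩
      have hr : (0 : ℝ) < (r : ℝ) := r.2
      simp only [Prod.map, id_eq]
      rw [restrictionOp, Set.indicator_of_mem r.2, abs_of_pos hr, mul_one]
      set A : ℂ := (((r : ℝ) : ℂ) / (2 * (π : ℂ) * Complex.I)) ^ (((d : ℂ) - 1) / 2) with hA
      have hbne : ((((r : ℝ)) : ℂ) / (2 * (π : ℂ) * Complex.I)) ≠ 0 := by
        apply div_ne_zero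
        · exact Complex.ofReal_ne_zero.2 hr.ne'
        · simp [Real.pi_ne_zero, Complex.I_ne_zero, Complex.ofReal_ne_zero]
      have habs : ‖((((r : ℝ)) : ℂ) / (2 * (π : ℂ) * Complex.I))‖
          = (r : ℝ) / (2 * π) := by
        rw [norm_div, Complex.norm_real, Real.norm_eq_abs, abs_of_pos hr]
        congr 1
        simp [abs_of_pos Real.pi_pos]
      have hexp : (((d : ℂ) - 1) / 2) = (((((d : ℝ) - 1) / 2 : ℝ)) : ℂ) := by
        push_cast; ring
      have hnA : ‖A‖ = ((r : ℝ) / (2 * π)) ^ (((d : ℝ) - 1) / 2) := by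
        rw [hA, hexp, Complex.norm_cpow_of_ne_zero hbne, habs]
        simp
      have hApos : (0 : ℝ) < ‖A‖ := by
        rw [hnA]; exact Real.rpow_pos_of_pos (by positivity) _
      rw [nnnorm_mul]
      push_cast
      rw [ENNReal.mul_rpow_of_nonneg _ _ (by norm_num : (0:ℝ) ≤ 2)]
      have hAcalc : ((‖A‖₊ : ℝ≥0∞)) ^ (2 : ℝ) = w r * C := by
        rw [← enorm_eq_nnnorm, ← ofReal_norm, ENNReal.ofReal_rpow_of_pos hApos, hnA,
          ← Real.rpow_mul (div_nonneg hr.le (by positivity))]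
        have h2 : ((d : ℝ) - 1) / 2 * (2 : ℝ) = (d : ℝ) - 1 := by ring
        rw [h2, Real.div_rpow hr.le (by positivity), div_eq_mul_inv,
          ← Real.rpow_neg (by positivity),
          ENNReal.ofReal_mul (by positivity)]
        congr 1
        rw [hw]
        congr 1
        rw [show (d : ℝ) - 1 = (n : ℝ) by rw [hn, Nat.cast_sub hd]; norm_num,
          Real.rpow_natCast]
      rw [hAcalc, hH]
      ring
    rw [lintegral_congr ptwise]
    have hCH : AEMeasurable (fun z => C * H z) ((σ.prod ρ).withDensity fun p => w p.2) := by
      rw [← prod_withDensity_aux σ ρ hwm]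
      exact hHmeas.const_mul C
    have hdens : ∫⁻ z, C * H z ∂((σ.prod ρ).withDensity fun p => w p.2)
        = ∫⁻ z, w z.2 * (C * H z) ∂(σ.prod ρ) := by
      exact lintegral_withDensity_eq_lintegral_mul₀'
        (f := fun p : sphere (0 : EuclideanSpace ℝ (Fin d)) 1 × Set.Ioi (0 : ℝ) => w p.2)
        ((hwm.comp measurable_snd).aemeasurable) hCH
    rw [← hdens, ← prod_withDensity_aux σ ρ hwm,
      lintegral_const_mul' C _ ENNReal.ofReal_ne_top]
    congr 1
    rw [hmapeq, (Φ.measurableEmbedding).lintegral_map]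
    have hHc2 : ∀ x : ({0}ᶜ : Set (EuclideanSpace ℝ (Fin d))),
        H (Φ x) = (‖u0 x.1‖₊ : ℝ≥0∞) ^ (2 : ℝ) := fun x => congrFun hHcomp x
    rw [lintegral_congr hHc2]
    rw [lintegral_subtype_comap hsub fun y => (‖u0 y‖₊ : ℝ≥0∞) ^ (2 : ℝ),
      MeasureTheory.restrict_compl_singleton]
  -- put things together
  rw [eLpNorm_eq_lintegral_rpow_enorm_toReal two_ne_zero ENNReal.ofNat_ne_top,
    eLpNorm_eq_lintegral_rpow_enorm_toReal two_ne_zero ENNReal.ofNat_ne_top]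
  simp only [ENNReal.toReal_ofNat, enorm_eq_nnnorm]
  rw [key]
  have hCsq : C = (ENNReal.ofReal ((2 * π) ^ (-(((d : ℝ) - 1) / 2)))) ^ (2 : ℝ) := by
    have h3 : -(((d : ℝ) - 1) / 2) * (2 : ℝ) = -((d : ℝ) - 1) := by ring
    rw [hC, ENNReal.ofReal_rpow_of_pos (Real.rpow_pos_of_pos hπ0 _),
      ← Real.rpow_mul hπ0.le, h3]
  rw [hCsq, ENNReal.mul_rpow_of_nonneg _ _ (by norm_num : (0:ℝ) ≤ 1/2),
    ← ENNReal.rpow_mul]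
  norm_num

end
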